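/- Suppose ∑_{j∈J} a_j x_j ≥ α is a valid inequality for circuits on values v_1 < ... < v_n, |J| ≤ n − 4, and it holds at equality for at least one circuit. If ∑_{j=1}^n d_j x_j = δ is satisfied by every circuit that satisfies the inequality at equality, then d_i = d_j for all i, j ∉ J. -/

import Mathlib

/-- A circuit on `{1,...,n}`: a permutation of `Fin n` that is a single `n`-cycle. -/
def IsCircuitPerm {n : ℕ} (σ : Equiv.Perm (Fin n)) : Prop :=
  σ.IsCycle ∧ σ.support = Finset.univ

/-- A circuit point on values `v`: `x i = v (σ i)` for some single-`n`-cycle permutation `σ`. -/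
def IsCircuitPt {n : ℕ} (v : Fin n → ℝ) (x : Fin n → ℝ) : Prop :=
  ∃ σ : Equiv.Perm (Fin n), IsCircuitPerm σ ∧ ∀ i, x i = v (σ i)


/-! Helper permutations: piecewise shifts of blocks of `Fin n`. -/

/-- block swap: exchanges the blocks `(p,q]` and `(q,s]`, identity elsewhere. -/
def swapf (p q s : ℕ) : ℕ → ℕ := fun t =>
  if p < t ∧ t ≤ q then t + (s - q) else if q < t ∧ t ≤ s then t - (q - p) else t

def swapg (p q s : ℕ) : ℕ → ℕ := fun t =>
  if p < t ∧ t ≤ p + (s - q) then t + (q - p)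
  else if p + (s - q) < t ∧ t ≤ s then t - (s - q) else t

def swapPerm (n p q s : ℕ) (hh : p < q ∧ q < s ∧ s < n) : Equiv.Perm (Fin n) where
  toFun t := ⟨swapf p q s t.1, by
    have := t.2; simp only [swapf]; split_ifs <;> omega⟩
  invFun t := ⟨swapg p q s t.1, by
    have := t.2; simp only [swapg]; split_ifs <;> omega⟩
  left_inv t := by
    apply Fin.ext
    show swapg p q s (swapf p q s t.1) = t.1
    have := t.2
    simp only [swapf, swapg]; split_ifs <;> omega
  right_inv t := by
    apply Fin.ext
    show swapf p q s (swapg p q s t.1) = t.1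
    have := t.2
    simp only [swapf, swapg]; split_ifs <;> omega

lemma finRotate_val (m : ℕ) (t : Fin (m + 2)) :
    (finRotate (m + 2) t).val = (t.val + 1) % (m + 2) := by
  have : finRotate (m + 2) t = t + 1 := finRotate_succ_apply t
  rw [this, Fin.add_def]
  simp [Fin.val_one]

lemma swap_conj (n p q s : ℕ) (hh : p < q ∧ q < s ∧ s < n) (t u : Fin n)
    (hnat : swapg p q s ((swapf p q s t.val + 1) % n) = (u.val + 1) % n) :
    (swapPerm n p q s hh).symm (finRotate n (swapPerm n p q s hh t)) = finRotate n u := by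
  obtain ⟨m, rfl⟩ : ∃ m, n = m + 2 := ⟨n - 2, by omega⟩
  rw [Fin.ext_iff]
  have h1 : ((swapPerm (m+2) p q s hh).symm (finRotate (m+2) (swapPerm (m+2) p q s hh t))).val
      = swapg p q s ((finRotate (m+2) (swapPerm (m+2) p q s hh t)).val) := rfl
  rw [h1, finRotate_val, finRotate_val]
  exact hnat

lemma swap_nat_ne (n p q s t : ℕ) (hpq : p < q) (hqs : q < s) (hsn : s < n)
    (ht : t < n) (h1 : t ≠ p) (h2 : t ≠ q) (h3 : t ≠ s) :
    swapg p q s ((swapf p q s t + 1) % n) = (t + 1) % n := by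
  rcases Nat.lt_or_ge (t + 1) n with h | h
  · have h5 : swapf p q s t + 1 < n := by
      simp only [swapf]; split_ifs <;> omega
    rw [Nat.mod_eq_of_lt h5, Nat.mod_eq_of_lt h]
    simp only [swapf, swapg]; split_ifs <;> omega
  · have ht1 : t + 1 = n := by omega
    have hft : swapf p q s t = t := by
      simp only [swapf]; split_ifs <;> omega
    rw [hft, ht1, Nat.mod_self]
    simp only [swapg]; split_ifs <;> omega

lemma swap_nat_p (n p q s : ℕ) (hpq : p < q) (hqs : q < s) (hsn : s < n) :
    swapg p q s ((swapf p q s p + 1) % n) = (q + 1) % n := by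
  have hfp : swapf p q s p = p := by simp only [swapf]; split_ifs <;> omega
  rw [hfp, Nat.mod_eq_of_lt (by omega), Nat.mod_eq_of_lt (by omega)]
  simp only [swapg]; split_ifs <;> omega

lemma swap_nat_q (n p q s : ℕ) (hpq : p < q) (hqs : q < s) (hsn : s < n) :
    swapg p q s ((swapf p q s q + 1) % n) = (s + 1) % n := by
  have hfq : swapf p q s q = s := by simp only [swapf]; split_ifs <;> omega
  rw [hfq]
  rcases Nat.lt_or_ge (s + 1) n with h | h
  · rw [Nat.mod_eq_of_lt h]
    simp only [swapg]; split_ifs <;> omega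
  · rw [show s + 1 = n by omega, Nat.mod_self]
    simp only [swapg]; split_ifs <;> omega

lemma swap_nat_s (n p q s : ℕ) (hpq : p < q) (hqs : q < s) (hsn : s < n) :
    swapg p q s ((swapf p q s s + 1) % n) = (p + 1) % n := by
  have hfs : swapf p q s s = s - (q - p) := by simp only [swapf]; split_ifs <;> omega
  rw [hfs, Nat.mod_eq_of_lt (by omega), Nat.mod_eq_of_lt (by omega)]
  simp only [swapg]; split_ifs <;> omega

/-- block reversal: reverses the order of the three blocks `(p,q]`, `(q,s]`, `(s,e]`. -/
def revf (p q s e : ℕ) : ℕ → ℕ := fun t =>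
  if p < t ∧ t ≤ q then t + (e - q)
  else if q < t ∧ t ≤ s then p + (e - s) + t - q
  else if s < t ∧ t ≤ e then t - (s - p) else t

def revg (p q s e : ℕ) : ℕ → ℕ := fun t =>
  if p < t ∧ t ≤ p + (e - s) then t + (s - p)
  else if p + (e - s) < t ∧ t ≤ p + (e - s) + (s - q) then t + q - (p + (e - s))
  else if p + (e - s) + (s - q) < t ∧ t ≤ e then t - (e - q) else t

def revPerm (n p q s e : ℕ) (hh : p < q ∧ q < s ∧ s < e ∧ e < n) : Equiv.Perm (Fin n) where
  toFun t := ⟨revf p q s e t.1, by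
    have := t.2; simp only [revf]; split_ifs <;> omega⟩
  invFun t := ⟨revg p q s e t.1, by
    have := t.2; simp only [revg]; split_ifs <;> omega⟩
  left_inv t := by
    apply Fin.ext
    show revg p q s e (revf p q s e t.1) = t.1
    have := t.2
    simp only [revf, revg]; split_ifs <;> omega
  right_inv t := by
    apply Fin.ext
    show revf p q s e (revg p q s e t.1) = t.1
    have := t.2
    simp only [revf, revg]; split_ifs <;> omega

lemma rev_conj (n p q s e : ℕ) (hh : p < q ∧ q < s ∧ s < e ∧ e < n) (t u : Fin n)
    (hnat : revg p q s e ((revf p q s e t.val + 1) % n) = (u.val + 1) % n) :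
    (revPerm n p q s e hh).symm (finRotate n (revPerm n p q s e hh t)) = finRotate n u := by
  obtain ⟨m, rfl⟩ : ∃ m, n = m + 2 := ⟨n - 2, by omega⟩
  rw [Fin.ext_iff]
  have h1 : ((revPerm (m+2) p q s e hh).symm (finRotate (m+2) (revPerm (m+2) p q s e hh t))).val
      = revg p q s e ((finRotate (m+2) (revPerm (m+2) p q s e hh t)).val) := rfl
  rw [h1, finRotate_val, finRotate_val]
  exact hnat

lemma rev_nat_ne (n p q s e t : ℕ) (hpq : p < q) (hqs : q < s) (hse : s < e) (hen : e < n)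
    (ht : t < n) (h1 : t ≠ p) (h2 : t ≠ q) (h3 : t ≠ s) (h4 : t ≠ e) :
    revg p q s e ((revf p q s e t + 1) % n) = (t + 1) % n := by
  rcases Nat.lt_or_ge (t + 1) n with h | h
  · have h5 : revf p q s e t + 1 < n := by
      simp only [revf]; split_ifs <;> omega
    rw [Nat.mod_eq_of_lt h5, Nat.mod_eq_of_lt h]
    simp only [revf, revg]; split_ifs <;> omega
  · have ht1 : t + 1 = n := by omega
    have hft : revf p q s e t = t := by
      simp only [revf]; split_ifs <;> omega
    rw [hft, ht1, Nat.mod_self]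
    simp only [revg]; split_ifs <;> omega

lemma rev_nat_p (n p q s e : ℕ) (hpq : p < q) (hqs : q < s) (hse : s < e) (hen : e < n) :
    revg p q s e ((revf p q s e p + 1) % n) = (s + 1) % n := by
  have hfp : revf p q s e p = p := by simp only [revf]; split_ifs <;> omega
  rw [hfp, Nat.mod_eq_of_lt (by omega), Nat.mod_eq_of_lt (by omega)]
  simp only [revg]; split_ifs <;> omega

lemma rev_nat_q (n p q s e : ℕ) (hpq : p < q) (hqs : q < s) (hse : s < e) (hen : e < n) :
    revg p q s e ((revf p q s e q + 1) % n) = (e + 1) % n := by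
  have hfq : revf p q s e q = e := by simp only [revf]; split_ifs <;> omega
  rw [hfq]
  rcases Nat.lt_or_ge (e + 1) n with h | h
  · rw [Nat.mod_eq_of_lt h]
    simp only [revg]; split_ifs <;> omega
  · rw [show e + 1 = n by omega, Nat.mod_self]
    simp only [revg]; split_ifs <;> omega

lemma rev_nat_s (n p q s e : ℕ) (hpq : p < q) (hqs : q < s) (hse : s < e) (hen : e < n) :
    revg p q s e ((revf p q s e s + 1) % n) = (p + 1) % n := by
  have hfs : revf p q s e s = p + (e - s) + s - q := by
    simp only [revf]; split_ifs <;> omega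
  rw [hfs, Nat.mod_eq_of_lt (by omega), Nat.mod_eq_of_lt (by omega)]
  simp only [revg]; split_ifs <;> omega

lemma rev_nat_e (n p q s e : ℕ) (hpq : p < q) (hqs : q < s) (hse : s < e) (hen : e < n) :
    revg p q s e ((revf p q s e e + 1) % n) = (q + 1) % n := by
  have hfe : revf p q s e e = e - (s - p) := by simp only [revf]; split_ifs <;> omega
  rw [hfe, Nat.mod_eq_of_lt (by omega), Nat.mod_eq_of_lt (by omega)]
  simp only [revg]; split_ifs <;> omega


lemma circuit_algebra (x y z w d1 d2 d3 d4 : ℝ) (hxy : x ≠ y) (hzw : z ≠ w) (hyw : y ≠ w)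
    (e1 : d1*y + d2*z + d3*x + d4*w = d1*x + d2*y + d3*z + d4*w)
    (e2 : d1*x + d2*z + d3*w + d4*y = d1*x + d2*y + d3*z + d4*w)
    (e3 : d1*y + d2*w + d3*z + d4*x = d1*x + d2*y + d3*z + d4*w)
    (e4 : d1*z + d2*y + d3*w + d4*x = d1*x + d2*y + d3*z + d4*w)
    (e5 : d1*z + d2*w + d3*x + d4*y = d1*x + d2*y + d3*z + d4*w) :
    d1 = d2 ∧ d2 = d3 ∧ d3 = d4 := by
  have h23 : (d2 - d3) * (z - w) = 0 := by linear_combination (e1 + e2 - e3 + e4 - e5) / 2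
  have hd23 : d2 = d3 := by
    rcases mul_eq_zero.mp h23 with h | h
    · linarith
    · exact absurd (by linarith : z = w) hzw
  have h24 : (d2 - d4) * (w - y) = 0 := by linear_combination (- e1 + e2 + e3 - e4 + e5) / 2
  have hd24 : d2 = d4 := by
    rcases mul_eq_zero.mp h24 with h | h
    · linarith
    · exact absurd (by linarith : w = y) (fun hh => hyw hh.symm)
  have h12 : (d1 - d2) * (y - x) = 0 := by linear_combination e1 + (x - z) * hd23
  have hd12 : d1 = d2 := by
    rcases mul_eq_zero.mp h12 with h | h
    · linarith
    · exact absurd (by linarith : x = y) hxy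
  exact ⟨hd12, hd23, by linarith⟩

/-- If `∑_{j∈J} a_j x_j ≥ α` is valid for circuits, `|J| ≤ n − 4`, it is tight for at
least one circuit, and `∑_i d_i x_i = δ` holds for every circuit tight for the
inequality, then `d_i = d_j` for all `i, j ∉ J`. -/
theorem stmt_19 (n : ℕ) (hn : 5 ≤ n) (v : Fin n → ℝ) (hv : StrictMono v)
    (J : Finset (Fin n)) (hJ : J.card ≤ n - 4)
    (a : Fin n → ℝ) (α : ℝ)
    (hvalid : ∀ x : Fin n → ℝ, IsCircuitPt v x → α ≤ ∑ j ∈ J, a j * x j)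
    (x0 : Fin n → ℝ) (hx0 : IsCircuitPt v x0) (htight : ∑ j ∈ J, a j * x0 j = α)
    (d : Fin n → ℝ) (δ : ℝ)
    (hd : ∀ x : Fin n → ℝ, IsCircuitPt v x → ∑ j ∈ J, a j * x j = α →
      ∑ i, d i * x i = δ) :
    ∀ i ∉ J, ∀ j ∉ J, d i = d j := by
  obtain ⟨m, rfl⟩ : ∃ m, n = m + 2 := ⟨n - 2, by omega⟩
  intro i hi j hj
  by_cases hij : i = j
  · rw [hij]
  obtain ⟨σ, hσ, hx0v⟩ := hx0
  set r : Equiv.Perm (Fin (m + 2)) := finRotate (m + 2) with hrdef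
  have hrc : r.IsCycle := isCycle_finRotate
  have hrs : r.support = Finset.univ := support_finRotate
  have hconj : IsConj r σ := hrc.isConj hσ.1 (by rw [hrs, hσ.2])
  obtain ⟨g, hg⟩ := isConj_iff.mp hconj
  have hσg : ∀ t, σ (g t) = g (r t) := by
    intro t
    rw [← hg]
    simp [Equiv.Perm.mul_apply]
  -- positions in "rotation coordinates"
  set J' : Finset (Fin (m + 2)) := J.image (fun x => g.symm x) with hJ'def
  have hmemJ' : ∀ x ∈ J, g.symm x ∈ J' := fun x hx => Finset.mem_image.mpr ⟨x, hx, rfl⟩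
  have hJ'card : J'.card = J.card := Finset.card_image_of_injective _ (Equiv.injective _)
  have hcompl : 4 ≤ J'ᶜ.card := by
    rw [Finset.card_compl, hJ'card]
    simp only [Fintype.card_fin]
    omega
  have hti : g.symm i ∈ J'ᶜ := by
    rw [Finset.mem_compl]
    intro hmem
    obtain ⟨x, hx, hx2⟩ := Finset.mem_image.mp hmem
    exact hi (by rwa [Equiv.injective _ hx2] at hx)
  have htj : g.symm j ∈ J'ᶜ := by
    rw [Finset.mem_compl]
    intro hmem
    obtain ⟨x, hx, hx2⟩ := Finset.mem_image.mp hmem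
    exact hj (by rwa [Equiv.injective _ hx2] at hx)
  have hpair : ({g.symm i, g.symm j} : Finset (Fin (m + 2))) ⊆ J'ᶜ := by
    intro x hx
    rcases Finset.mem_insert.mp hx with h | h
    · rwa [h]
    · rw [Finset.mem_singleton.mp h]; exact htj
  obtain ⟨T, hsubT, hTc, hT4⟩ :=
    Finset.exists_subsuperset_card_eq hpair
      (le_trans (Finset.card_insert_le _ _) (by simp)) hcompl
  set oi := T.orderIsoOfFin hT4 with hoidef
  set kk : Fin 4 → Fin (m + 2) := fun a4 => (oi a4 : Fin (m + 2)) with hkkdef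
  have hkmono : StrictMono kk := fun a b hab => oi.strictMono hab
  have hkT : ∀ a4, kk a4 ∈ T := fun a4 => (oi a4).2
  have hkJ' : ∀ a4, kk a4 ∉ J' := fun a4 => Finset.mem_compl.mp (hTc (hkT a4))
  have hkne : ∀ a b : Fin 4, a ≠ b → kk a ≠ kk b := fun a b hab => hkmono.injective.ne hab
  have hksurj : ∀ x ∈ T, ∃ a4, kk a4 = x := by
    intro x hx
    exact ⟨oi.symm ⟨x, hx⟩, by simp [hkkdef]⟩
  -- the master relation
  have key : ∀ (ψ : Equiv.Perm (Fin (m + 2))) (u1 u2 u3 u4 : Fin (m + 2)),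
      (∀ t, t ≠ kk 0 → t ≠ kk 1 → t ≠ kk 2 → t ≠ kk 3 → ψ.symm (r (ψ t)) = r t) →
      ψ.symm (r (ψ (kk 0))) = r u1 → ψ.symm (r (ψ (kk 1))) = r u2 →
      ψ.symm (r (ψ (kk 2))) = r u3 → ψ.symm (r (ψ (kk 3))) = r u4 →
      d (g (kk 0)) * v (g (r u1)) + d (g (kk 1)) * v (g (r u2)) +
        d (g (kk 2)) * v (g (r u3)) + d (g (kk 3)) * v (g (r u4)) =
      d (g (kk 0)) * v (g (r (kk 0))) + d (g (kk 1)) * v (g (r (kk 1))) +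
        d (g (kk 2)) * v (g (r (kk 2))) + d (g (kk 3)) * v (g (r (kk 3))) := by
    intro ψ u1 u2 u3 u4 hfix hu1 hu2 hu3 hu4
    set τ : Equiv.Perm (Fin (m + 2)) := (g * ψ.symm) * r * (g * ψ.symm)⁻¹ with hτdef
    have hτapp : ∀ x, τ x = g (ψ.symm (r (ψ (g.symm x)))) := fun x => rfl
    have hτcirc : IsCircuitPerm τ := by
      constructor
      · exact hrc.conj
      · rw [hτdef, Equiv.Perm.support_conj, hrs]
        simp
    set S : Finset (Fin (m + 2)) := {g (kk 0), g (kk 1), g (kk 2), g (kk 3)} with hSdef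
    have hout : ∀ x : Fin (m + 2), x ∉ S → τ x = σ x := by
      intro x hx
      have hne : ∀ a4 : Fin 4, g.symm x ≠ kk a4 := by
        intro a4 hc
        apply hx
        have : x = g (kk a4) := by rw [← hc]; simp
        rw [this, hSdef]
        fin_cases a4 <;> simp
      rw [hτapp, hfix _ (hne 0) (hne 1) (hne 2) (hne 3), ← hσg]
      simp
    have hJS : ∀ jj ∈ J, jj ∉ S := by
      intro jj hjj hjS
      rw [hSdef] at hjS
      simp only [Finset.mem_insert, Finset.mem_singleton] at hjS
      have : ∃ a4 : Fin 4, jj = g (kk a4) := by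
        rcases hjS with h | h | h | h
        exacts [⟨0, h⟩, ⟨1, h⟩, ⟨2, h⟩, ⟨3, h⟩]
      obtain ⟨a4, ha4⟩ := this
      apply hkJ' a4
      have : g.symm jj = kk a4 := by rw [ha4]; simp
      rw [← this]
      exact hmemJ' jj hjj
    have htightτ : ∑ jj ∈ J, a jj * v (τ jj) = α := by
      rw [← htight]
      refine Finset.sum_congr rfl fun jj hjj => ?_
      rw [hout jj (hJS jj hjj), ← hx0v jj]
    have hδτ : ∑ i', d i' * v (τ i') = δ :=
      hd _ ⟨τ, hτcirc, fun _ => rfl⟩ htightτ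
    have hδ0 : ∑ i', d i' * v (σ i') = δ := by
      rw [← hd x0 ⟨σ, hσ, hx0v⟩ htight]
      exact Finset.sum_congr rfl fun i' _ => by rw [hx0v i']
    have hzero : ∑ i' : Fin (m + 2), (d i' * v (τ i') - d i' * v (σ i')) = 0 := by
      rw [Finset.sum_sub_distrib, hδτ, hδ0, sub_self]
    have hSsum : ∑ i' ∈ S, (d i' * v (τ i') - d i' * v (σ i')) = 0 := by
      rw [Finset.sum_subset (Finset.subset_univ S)
        (fun x _ hx => by rw [hout x hx, sub_self]), hzero]
    have hgkne : ∀ a b : Fin 4, a ≠ b → g (kk a) ≠ g (kk b) :=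
      fun a b hab hc => hkne a b hab (Equiv.injective _ hc)
    have hτk : ∀ (a4 : Fin 4) (u : Fin (m + 2)),
        ψ.symm (r (ψ (kk a4))) = r u → τ (g (kk a4)) = g (r u) := by
      intro a4 u huu
      rw [hτapp]
      simp only [Equiv.symm_apply_apply]
      rw [huu]
    rw [hSdef] at hSsum
    rw [Finset.sum_insert (by
        simp only [Finset.mem_insert, Finset.mem_singleton]
        push_neg
        exact ⟨hgkne 0 1 (by decide), hgkne 0 2 (by decide), hgkne 0 3 (by decide)⟩),
      Finset.sum_insert (by
        simp only [Finset.mem_insert, Finset.mem_singleton]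
        push_neg
        exact ⟨hgkne 1 2 (by decide), hgkne 1 3 (by decide)⟩),
      Finset.sum_insert (by
        simp only [Finset.mem_singleton]
        exact hgkne 2 3 (by decide)),
      Finset.sum_singleton] at hSsum
    rw [hτk 0 u1 hu1, hτk 1 u2 hu2, hτk 2 u3 hu3, hτk 3 u4 hu4,
      hσg (kk 0), hσg (kk 1), hσg (kk 2), hσg (kk 3)] at hSsum
    linarith

  -- value-level facts about the four marked points
  have h01 : (kk 0).val < (kk 1).val := hkmono (show (0:Fin 4) < 1 by decide)
  have h12 : (kk 1).val < (kk 2).val := hkmono (show (1:Fin 4) < 2 by decide)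
  have h23v : (kk 2).val < (kk 3).val := hkmono (show (2:Fin 4) < 3 by decide)
  have hb2 : (kk 2).val < m + 2 := (kk 2).isLt
  have hb3 : (kk 3).val < m + 2 := (kk 3).isLt
  have hvne : ∀ a b : Fin 4, a ≠ b → (kk a).val ≠ (kk b).val :=
    fun a b hab hc => hkne a b hab (Fin.ext hc)
  have swapmove : ∀ (p q s : ℕ) (hh : p < q ∧ q < s ∧ s < m + 2) (t u : Fin (m + 2)),
      swapg p q s ((swapf p q s t.val + 1) % (m + 2)) = (u.val + 1) % (m + 2) →
      (swapPerm (m + 2) p q s hh).symm (r ((swapPerm (m + 2) p q s hh) t)) = r u := by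
    intro p q s hh t u hnat
    rw [hrdef]
    exact swap_conj _ p q s hh t u hnat
  have revmove : ∀ (p q s e : ℕ) (hh : p < q ∧ q < s ∧ s < e ∧ e < m + 2) (t u : Fin (m + 2)),
      revg p q s e ((revf p q s e t.val + 1) % (m + 2)) = (u.val + 1) % (m + 2) →
      (revPerm (m + 2) p q s e hh).symm (r ((revPerm (m + 2) p q s e hh) t)) = r u := by
    intro p q s e hh t u hnat
    rw [hrdef]
    exact rev_conj _ p q s e hh t u hnat
  have hh1 : (kk 0).val < (kk 1).val ∧ (kk 1).val < (kk 2).val ∧ (kk 2).val < m + 2 :=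
    ⟨h01, h12, hb2⟩
  have m1 := key (swapPerm (m + 2) (kk 0).val (kk 1).val (kk 2).val hh1) (kk 1) (kk 2) (kk 0) (kk 3)
    (fun t h0 h1 h2 _ => swapmove _ _ _ hh1 t t
      (swap_nat_ne _ _ _ _ _ h01 h12 hb2 t.isLt (fun hc => h0 (Fin.ext hc))
        (fun hc => h1 (Fin.ext hc)) (fun hc => h2 (Fin.ext hc))))
    (swapmove _ _ _ hh1 (kk 0) (kk 1) (swap_nat_p _ _ _ _ h01 h12 hb2))
    (swapmove _ _ _ hh1 (kk 1) (kk 2) (swap_nat_q _ _ _ _ h01 h12 hb2))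
    (swapmove _ _ _ hh1 (kk 2) (kk 0) (swap_nat_s _ _ _ _ h01 h12 hb2))
    (swapmove _ _ _ hh1 (kk 3) (kk 3)
      (swap_nat_ne _ _ _ _ _ h01 h12 hb2 (kk 3).isLt (hvne 3 0 (by decide))
        (hvne 3 1 (by decide)) (hvne 3 2 (by decide))))
  have hh2 : (kk 1).val < (kk 2).val ∧ (kk 2).val < (kk 3).val ∧ (kk 3).val < m + 2 :=
    ⟨h12, h23v, hb3⟩
  have m2 := key (swapPerm (m + 2) (kk 1).val (kk 2).val (kk 3).val hh2) (kk 0) (kk 2) (kk 3) (kk 1)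
    (fun t h0 h1 h2 h3 => swapmove _ _ _ hh2 t t
      (swap_nat_ne _ _ _ _ _ h12 h23v hb3 t.isLt (fun hc => h1 (Fin.ext hc))
        (fun hc => h2 (Fin.ext hc)) (fun hc => h3 (Fin.ext hc))))
    (swapmove _ _ _ hh2 (kk 0) (kk 0)
      (swap_nat_ne _ _ _ _ _ h12 h23v hb3 (kk 0).isLt (hvne 0 1 (by decide))
        (hvne 0 2 (by decide)) (hvne 0 3 (by decide))))
    (swapmove _ _ _ hh2 (kk 1) (kk 2) (swap_nat_p _ _ _ _ h12 h23v hb3))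
    (swapmove _ _ _ hh2 (kk 2) (kk 3) (swap_nat_q _ _ _ _ h12 h23v hb3))
    (swapmove _ _ _ hh2 (kk 3) (kk 1) (swap_nat_s _ _ _ _ h12 h23v hb3))
  have h13 : (kk 1).val < (kk 3).val := lt_trans h12 h23v
  have hh3 : (kk 0).val < (kk 1).val ∧ (kk 1).val < (kk 3).val ∧ (kk 3).val < m + 2 :=
    ⟨h01, h13, hb3⟩
  have m3 := key (swapPerm (m + 2) (kk 0).val (kk 1).val (kk 3).val hh3) (kk 1) (kk 3) (kk 2) (kk 0)
    (fun t h0 h1 _ h3 => swapmove _ _ _ hh3 t t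
      (swap_nat_ne _ _ _ _ _ h01 h13 hb3 t.isLt (fun hc => h0 (Fin.ext hc))
        (fun hc => h1 (Fin.ext hc)) (fun hc => h3 (Fin.ext hc))))
    (swapmove _ _ _ hh3 (kk 0) (kk 1) (swap_nat_p _ _ _ _ h01 h13 hb3))
    (swapmove _ _ _ hh3 (kk 1) (kk 3) (swap_nat_q _ _ _ _ h01 h13 hb3))
    (swapmove _ _ _ hh3 (kk 2) (kk 2)
      (swap_nat_ne _ _ _ _ _ h01 h13 hb3 (kk 2).isLt (hvne 2 0 (by decide))
        (hvne 2 1 (by decide)) (hvne 2 3 (by decide))))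
    (swapmove _ _ _ hh3 (kk 3) (kk 0) (swap_nat_s _ _ _ _ h01 h13 hb3))
  have h02 : (kk 0).val < (kk 2).val := lt_trans h01 h12
  have hh4 : (kk 0).val < (kk 2).val ∧ (kk 2).val < (kk 3).val ∧ (kk 3).val < m + 2 :=
    ⟨h02, h23v, hb3⟩
  have m4 := key (swapPerm (m + 2) (kk 0).val (kk 2).val (kk 3).val hh4) (kk 2) (kk 1) (kk 3) (kk 0)
    (fun t h0 _ h2 h3 => swapmove _ _ _ hh4 t t
      (swap_nat_ne _ _ _ _ _ h02 h23v hb3 t.isLt (fun hc => h0 (Fin.ext hc))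
        (fun hc => h2 (Fin.ext hc)) (fun hc => h3 (Fin.ext hc))))
    (swapmove _ _ _ hh4 (kk 0) (kk 2) (swap_nat_p _ _ _ _ h02 h23v hb3))
    (swapmove _ _ _ hh4 (kk 1) (kk 1)
      (swap_nat_ne _ _ _ _ _ h02 h23v hb3 (kk 1).isLt (hvne 1 0 (by decide))
        (hvne 1 2 (by decide)) (hvne 1 3 (by decide))))
    (swapmove _ _ _ hh4 (kk 2) (kk 3) (swap_nat_q _ _ _ _ h02 h23v hb3))
    (swapmove _ _ _ hh4 (kk 3) (kk 0) (swap_nat_s _ _ _ _ h02 h23v hb3))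
  have hh5 : (kk 0).val < (kk 1).val ∧ (kk 1).val < (kk 2).val ∧
      (kk 2).val < (kk 3).val ∧ (kk 3).val < m + 2 := ⟨h01, h12, h23v, hb3⟩
  have m5 := key (revPerm (m + 2) (kk 0).val (kk 1).val (kk 2).val (kk 3).val hh5)
      (kk 2) (kk 3) (kk 0) (kk 1)
    (fun t h0 h1 h2 h3 => revmove _ _ _ _ hh5 t t
      (rev_nat_ne _ _ _ _ _ _ h01 h12 h23v hb3 t.isLt (fun hc => h0 (Fin.ext hc))
        (fun hc => h1 (Fin.ext hc)) (fun hc => h2 (Fin.ext hc)) (fun hc => h3 (Fin.ext hc))))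
    (revmove _ _ _ _ hh5 (kk 0) (kk 2) (rev_nat_p _ _ _ _ _ h01 h12 h23v hb3))
    (revmove _ _ _ _ hh5 (kk 1) (kk 3) (rev_nat_q _ _ _ _ _ h01 h12 h23v hb3))
    (revmove _ _ _ _ hh5 (kk 2) (kk 0) (rev_nat_s _ _ _ _ _ h01 h12 h23v hb3))
    (revmove _ _ _ _ hh5 (kk 3) (kk 1) (rev_nat_e _ _ _ _ _ h01 h12 h23v hb3))
  have hWne : ∀ a b : Fin 4, a ≠ b → v (g (r (kk a))) ≠ v (g (r (kk b))) :=
    fun a b hab hc =>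
      hkne a b hab (Equiv.injective r (Equiv.injective g (hv.injective hc)))
  obtain ⟨E12, E23, E34⟩ :=
    circuit_algebra (v (g (r (kk 0)))) (v (g (r (kk 1)))) (v (g (r (kk 2)))) (v (g (r (kk 3))))
      (d (g (kk 0))) (d (g (kk 1))) (d (g (kk 2))) (d (g (kk 3)))
      (hWne 0 1 (by decide)) (hWne 2 3 (by decide)) (hWne 1 3 (by decide)) m1 m2 m3 m4 m5
  have hall : ∀ a4 : Fin 4, d (g (kk a4)) = d (g (kk 0)) := by
    intro a4
    fin_cases a4
    · rfl
    · exact E12.symm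
    · exact (E12.trans E23).symm
    · exact (E12.trans (E23.trans E34)).symm
  obtain ⟨ai, hai⟩ := hksurj (g.symm i) (hsubT (by simp))
  obtain ⟨aj, haj⟩ := hksurj (g.symm j) (hsubT (by simp))
  calc d i = d (g (g.symm i)) := by rw [Equiv.apply_symm_apply]
    _ = d (g (kk ai)) := by rw [hai]
    _ = d (g (kk 0)) := hall ai
    _ = d (g (kk aj)) := (hall aj).symm
    _ = d (g (g.symm j)) := by rw [haj]
    _ = d j := by rw [Equiv.apply_symm_apply]
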